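/- Let Ω = (a,b) × (c,d) be an open rectangle in ℝ² and let 0 < α₁ < 1. For all p, q ∈ L²(Ω), the bilinear form built from the partial left fractional integral in the x-variable is bounded: |∫_Ω (𝓘_x^{α₁} p)(x,y) · q(x,y) dx dy| ≤ ((b−a)^{α₁} / Γ(α₁+1)) · ‖p‖_{L²(Ω)} · ‖q‖_{L²(Ω)}. -/

import Mathlib

open MeasureTheory Real Set
open scoped ENNReal NNReal

/-- Partial left Riemann–Liouville fractional integral in the `x`-variable, base point `a`:
`(𝓘_x^{α} p)(x,y) = (1/Γ(α)) ∫_a^x (x−s)^{α−1} p(s,y) ds`. -/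
noncomputable def leftRLx (a α : ℝ) (p : ℝ × ℝ → ℝ) (z : ℝ × ℝ) : ℝ :=
  (1 / Real.Gamma α) * ∫ s in a..z.1, (z.1 - s) ^ (α - 1) * p (s, z.2)

private lemma kern_int {α : ℝ} (hα0 : 0 < α) (u v : ℝ) (huv : u ≤ v) :
    ∫⁻ s in Set.Ioc u v, ENNReal.ofReal ((v - s) ^ (α - 1)) =
      ENNReal.ofReal ((v - u) ^ α / α) := by
  have hint : IntervalIntegrable (fun s => (v - s) ^ (α - 1)) volume u v := by
    have h0 : IntervalIntegrable (fun t : ℝ => t ^ (α - 1)) volume (v - v) (v - u) := by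
      simpa using intervalIntegral.intervalIntegrable_rpow' (by linarith : (-1:ℝ) < α - 1)
        (a := v - v) (b := v - u)
    simpa using (h0.comp_sub_left v).symm
  have hintOn : IntegrableOn (fun s => (v - s) ^ (α - 1)) (Set.Ioc u v) volume := by
    rw [← intervalIntegrable_iff_integrableOn_Ioc_of_le huv]; exact hint
  rw [← ofReal_integral_eq_lintegral_ofReal hintOn ?nn]
  case nn =>
    filter_upwards [ae_restrict_mem measurableSet_Ioc] with s hs
    exact rpow_nonneg (by linarith [hs.2]) _
  congr 1
  have h1 : ∫ s in Set.Ioc u v, (v - s) ^ (α - 1) = ∫ s in u..v, (v - s) ^ (α - 1) := by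
    rw [intervalIntegral.integral_of_le huv]
  rw [h1, intervalIntegral.integral_comp_sub_left (fun t => t ^ (α - 1)) v]
  rw [integral_rpow (Or.inl (by linarith))]
  rw [sub_self, Real.zero_rpow (by linarith), sub_add_cancel]
  ring

private lemma kern_int2 {α : ℝ} (hα0 : 0 < α) (s v : ℝ) (hsv : s ≤ v) :
    ∫⁻ x in Set.Ioc s v, ENNReal.ofReal ((x - s) ^ (α - 1)) =
      ENNReal.ofReal ((v - s) ^ α / α) := by
  have hint : IntervalIntegrable (fun x => (x - s) ^ (α - 1)) volume s v := by
    have h0 : IntervalIntegrable (fun t : ℝ => t ^ (α - 1)) volume 0 (v - s) := by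
      simpa using intervalIntegral.intervalIntegrable_rpow' (by linarith : (-1:ℝ) < α - 1)
        (a := 0) (b := v - s)
    simpa using h0.comp_sub_right s
  have hintOn : IntegrableOn (fun x => (x - s) ^ (α - 1)) (Set.Ioc s v) volume := by
    rw [← intervalIntegrable_iff_integrableOn_Ioc_of_le hsv]; exact hint
  rw [← ofReal_integral_eq_lintegral_ofReal hintOn ?nn]
  case nn =>
    filter_upwards [ae_restrict_mem measurableSet_Ioc] with x hx
    exact rpow_nonneg (by linarith [hx.1]) _
  congr 1
  have h1 : ∫ x in Set.Ioc s v, (x - s) ^ (α - 1) = ∫ x in s..v, (x - s) ^ (α - 1) := by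
    rw [intervalIntegral.integral_of_le hsv]
  rw [h1, intervalIntegral.integral_comp_sub_right (fun t => t ^ (α - 1)) s]
  rw [integral_rpow (Or.inl (by linarith))]
  rw [sub_self, Real.zero_rpow (by linarith), sub_add_cancel]
  ring

private lemma key (a b c d α₁ : ℝ) (hab : a < b) (hcd : c < d)
    (hα0 : 0 < α₁) (hα1 : α₁ < 1) (p q : ℝ × ℝ → ℝ)
    (hpm : StronglyMeasurable p) (hqm : StronglyMeasurable q) :
    ∫⁻ z in Set.Ioo a b ×ˢ Set.Ioo c d, (‖leftRLx a α₁ p z * q z‖₊ : ℝ≥0∞) ≤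
      ENNReal.ofReal ((b - a) ^ α₁ / Real.Gamma (α₁ + 1)) *
        (eLpNorm p 2 (volume.restrict (Set.Ioo a b ×ˢ Set.Ioo c d)) *
         eLpNorm q 2 (volume.restrict (Set.Ioo a b ×ˢ Set.Ioo c d))) := by
  have hΓ : 0 < Real.Gamma α₁ := Real.Gamma_pos_of_pos hα0
  set Ω : Set (ℝ × ℝ) := Set.Ioo a b ×ˢ Set.Ioo c d with hΩdef
  have hΩm : MeasurableSet Ω := (measurableSet_Ioo.prod measurableSet_Ioo)
  set μ : Measure (ℝ × ℝ) := volume.restrict Ω with hμdef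
  set ν₁ : Measure ℝ := volume.restrict (Set.Ioo a b) with hν₁def
  set ν₂ : Measure ℝ := volume.restrict (Set.Ioo c d) with hν₂def
  have hprod : μ = ν₁.prod ν₂ := by
    rw [hμdef, hν₁def, hν₂def, Measure.prod_restrict, ← Measure.volume_eq_prod]
  -- basic data
  set A : ℝ := (b - a) ^ α₁ / α₁ with hAdef
  have hA0 : 0 ≤ A := div_nonneg (rpow_nonneg (by linarith) _) hα0.le
  set P : ℝ × ℝ → ℝ≥0∞ := fun z => (‖p z‖₊ : ℝ≥0∞) with hPdef
  set Q : ℝ × ℝ → ℝ≥0∞ := fun z => (‖q z‖₊ : ℝ≥0∞) with hQdef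
  have hPm : Measurable P := hpm.measurable.enorm
  have hQm : Measurable Q := hqm.measurable.enorm
  -- the kernel, with indicator, jointly measurable
  set W : ℝ × ℝ → ℝ≥0∞ :=
    Set.indicator {w : ℝ × ℝ | a < w.2 ∧ w.2 ≤ w.1}
      (fun w => ENNReal.ofReal ((w.1 - w.2) ^ (α₁ - 1))) with hWdef
  have hSm : MeasurableSet {w : ℝ × ℝ | a < w.2 ∧ w.2 ≤ w.1} :=
    (measurableSet_lt measurable_const measurable_snd).inter
      (measurableSet_le measurable_snd measurable_fst)
  have hWm : Measurable W :=
    Measurable.indicator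
      (((measurable_fst.sub measurable_snd).pow measurable_const).ennreal_ofReal) hSm
  have hWind : ∀ x s, W (x, s) =
      (Set.Ioc a x).indicator (fun s => ENNReal.ofReal ((x - s) ^ (α₁ - 1))) s := by
    intro x s
    simp [hWdef, Set.indicator_apply, Set.mem_Ioc, Set.mem_setOf_eq]
  have hWne : ∀ w, W w ≠ ∞ := by
    intro w
    rw [hWdef]
    by_cases hw : w ∈ {w : ℝ × ℝ | a < w.2 ∧ w.2 ≤ w.1} <;>
      simp [hw, ENNReal.ofReal_ne_top]
  -- inner integrals
  set I : ℝ × ℝ → ℝ≥0∞ :=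
    fun z => ∫⁻ s in Set.Ioc a z.1, ENNReal.ofReal ((z.1 - s) ^ (α₁ - 1)) * P (s, z.2)
    with hIdef
  set I₂ : ℝ × ℝ → ℝ≥0∞ :=
    fun z => ∫⁻ s, W (z.1, s) * P (s, z.2) ^ (2:ℝ) with hI₂def
  have hI₂eq : ∀ z : ℝ × ℝ, I₂ z =
      ∫⁻ s in Set.Ioc a z.1, ENNReal.ofReal ((z.1 - s) ^ (α₁ - 1)) * P (s, z.2) ^ (2:ℝ) := by
    intro z
    rw [hI₂def, ← lintegral_indicator measurableSet_Ioc]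
    apply lintegral_congr
    intro s
    rw [hWind, Set.indicator_mul_left]
  have hI₂m : Measurable I₂ := by
    apply Measurable.lintegral_prod_right'
      (f := fun w : (ℝ × ℝ) × ℝ => W (w.1.1, w.2) * P (w.2, w.1.2) ^ (2:ℝ))
    exact (hWm.comp ((measurable_fst.comp measurable_fst).prodMk measurable_snd)).mul
      ((hPm.comp (measurable_snd.prodMk (measurable_snd.comp measurable_fst))).pow
        measurable_const)
  have hconj : (2:ℝ).HolderConjugate 2 := Real.HolderConjugate.two_two
  -- Step 1 : pointwise bound of the integrand
  have step1 : ∀ᵐ z ∂μ, (‖leftRLx a α₁ p z * q z‖₊ : ℝ≥0∞) ≤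
      ENNReal.ofReal (1 / Real.Gamma α₁) * (I z * Q z) := by
    filter_upwards [ae_restrict_mem hΩm] with z hz
    obtain ⟨hz1, hz2⟩ := hz
    have hax : a ≤ z.1 := hz1.1.le
    have h1 : (‖leftRLx a α₁ p z * q z‖₊ : ℝ≥0∞) =
        (‖leftRLx a α₁ p z‖₊ : ℝ≥0∞) * Q z := by
      rw [nnnorm_mul]; push_cast; rfl
    rw [h1, ← mul_assoc]
    refine mul_le_mul_left ?_ (Q z)
    unfold leftRLx
    rw [nnnorm_mul]
    push_cast
    have h2 : (‖(1 / Real.Gamma α₁ : ℝ)‖₊ : ℝ≥0∞) = ENNReal.ofReal (1 / Real.Gamma α₁) := by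
      rw [← enorm_eq_nnnorm, ← ofReal_norm, Real.norm_eq_abs, abs_of_nonneg (by positivity)]
    rw [h2]
    refine mul_le_mul_right ?_ _
    rw [intervalIntegral.integral_of_le hax]
    refine le_trans (enorm_integral_le_lintegral_enorm _) ?_
    refine lintegral_mono_ae ?_
    filter_upwards [ae_restrict_mem measurableSet_Ioc] with s hs
    rw [enorm_mul]
    rw [← ofReal_norm ((z.1 - s) ^ (α₁ - 1)), Real.norm_eq_abs,
      abs_of_nonneg (rpow_nonneg (by linarith [hs.2]) _)]
    exact le_rfl
  -- Step 2 : inner Cauchy–Schwarz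
  have step2 : ∀ᵐ z ∂μ, I z * Q z ≤
      ENNReal.ofReal A ^ ((1:ℝ)/2) * (I₂ z ^ ((1:ℝ)/2) * Q z) := by
    filter_upwards [ae_restrict_mem hΩm] with z hz
    obtain ⟨hz1, _⟩ := hz
    have hax : a ≤ z.1 := hz1.1.le
    set ρ : Measure ℝ := volume.restrict (Set.Ioc a z.1) with hρdef
    set f : ℝ → ℝ≥0∞ := fun s => ENNReal.ofReal ((z.1 - s) ^ (α₁ - 1)) ^ ((1:ℝ)/2) with hfdef
    set g : ℝ → ℝ≥0∞ := fun s => ENNReal.ofReal ((z.1 - s) ^ (α₁ - 1)) ^ ((1:ℝ)/2) * P (s, z.2)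
      with hgdef
    have hfm : AEMeasurable f ρ :=
      ((((measurable_const.sub measurable_id).pow measurable_const).ennreal_ofReal).pow
        measurable_const).aemeasurable
    have hgm : AEMeasurable g ρ := by
      refine AEMeasurable.mul hfm ?_
      exact (hPm.comp (measurable_id.prodMk measurable_const)).aemeasurable
    have hCS := ENNReal.lintegral_mul_le_Lp_mul_Lq ρ hconj hfm hgm
    have hfg : ∀ s, (f * g) s = ENNReal.ofReal ((z.1 - s) ^ (α₁ - 1)) * P (s, z.2) := by
      intro s
      show f s * g s = _
      rw [hfdef, hgdef]
      simp only []
      rw [← mul_assoc, ← ENNReal.rpow_add_of_nonneg _ _ (by norm_num) (by norm_num)]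
      norm_num
    have hf2 : ∀ s, f s ^ (2:ℝ) = ENNReal.ofReal ((z.1 - s) ^ (α₁ - 1)) := by
      intro s
      rw [hfdef]
      rw [← ENNReal.rpow_mul]
      norm_num
    have hg2 : ∀ s, g s ^ (2:ℝ) =
        ENNReal.ofReal ((z.1 - s) ^ (α₁ - 1)) * P (s, z.2) ^ (2:ℝ) := by
      intro s
      rw [hgdef]
      simp only []
      rw [ENNReal.mul_rpow_of_nonneg _ _ (by norm_num : (0:ℝ) ≤ 2), ← ENNReal.rpow_mul]
      norm_num
    have hIle : I z ≤ (∫⁻ s, f s ^ (2:ℝ) ∂ρ) ^ ((1:ℝ)/2) * (∫⁻ s, g s ^ (2:ℝ) ∂ρ) ^ ((1:ℝ)/2) := by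
      rw [hIdef]
      calc ∫⁻ s in Set.Ioc a z.1, ENNReal.ofReal ((z.1 - s) ^ (α₁ - 1)) * P (s, z.2)
          = ∫⁻ s, (f * g) s ∂ρ := by
            rw [hρdef]; exact (lintegral_congr fun s => (hfg s).symm)
        _ ≤ _ := hCS
    have hkern : (∫⁻ s, f s ^ (2:ℝ) ∂ρ) ≤ ENNReal.ofReal A := by
      have : (∫⁻ s, f s ^ (2:ℝ) ∂ρ) = ENNReal.ofReal ((z.1 - a) ^ α₁ / α₁) := by
        rw [hρdef]
        rw [lintegral_congr fun s => hf2 s]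
        exact kern_int hα0 a z.1 hax
      rw [this]
      apply ENNReal.ofReal_le_ofReal
      apply div_le_div_of_nonneg_right ?_ hα0.le
      · exact rpow_le_rpow (by linarith) (by linarith [hz1.2]) hα0.le
    have hI₂' : (∫⁻ s, g s ^ (2:ℝ) ∂ρ) = I₂ z := by
      rw [hI₂eq z, hρdef]
      exact lintegral_congr fun s => hg2 s
    calc I z * Q z
        ≤ ((∫⁻ s, f s ^ (2:ℝ) ∂ρ) ^ ((1:ℝ)/2) * (∫⁻ s, g s ^ (2:ℝ) ∂ρ) ^ ((1:ℝ)/2)) * Q z :=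
          mul_le_mul_left hIle _
      _ ≤ (ENNReal.ofReal A ^ ((1:ℝ)/2) * I₂ z ^ ((1:ℝ)/2)) * Q z := by
          refine mul_le_mul_left (mul_le_mul' ?_ ?_) _
          · exact ENNReal.rpow_le_rpow hkern (by norm_num)
          · rw [hI₂']
      _ = ENNReal.ofReal A ^ ((1:ℝ)/2) * (I₂ z ^ ((1:ℝ)/2) * Q z) := by ring
  -- Step 3 : outer Cauchy–Schwarz
  have step3 : ∫⁻ z, I₂ z ^ ((1:ℝ)/2) * Q z ∂μ ≤
      (∫⁻ z, I₂ z ∂μ) ^ ((1:ℝ)/2) * (∫⁻ z, Q z ^ (2:ℝ) ∂μ) ^ ((1:ℝ)/2) := by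
    have hfm : Measurable (fun z => I₂ z ^ ((1:ℝ)/2)) :=
      hI₂m.pow (measurable_const : Measurable fun _ : ℝ × ℝ => (1:ℝ)/2)
    have h := ENNReal.lintegral_mul_le_Lp_mul_Lq μ hconj (f := fun z => I₂ z ^ ((1:ℝ)/2))
      (g := Q) hfm.aemeasurable hQm.aemeasurable
    refine le_trans (le_of_eq ?_) (le_trans h (le_of_eq ?_))
    · rfl
    · congr 1
      congr 1
      apply lintegral_congr
      intro z
      rw [← ENNReal.rpow_mul]
      norm_num
  -- Step 4 : Tonelli bound on ∫ I₂
  have step4 : ∫⁻ z, I₂ z ∂μ ≤ ENNReal.ofReal A * ∫⁻ z, P z ^ (2:ℝ) ∂μ := by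
    rw [hprod]
    rw [lintegral_prod _ (hI₂m.aemeasurable)]
    -- inner swap in (y, s) for each x
    have hswap1 : ∀ x : ℝ, ∫⁻ y, I₂ (x, y) ∂ν₂ =
        ∫⁻ s, W (x, s) * ∫⁻ y, P (s, y) ^ (2:ℝ) ∂ν₂ := by
      intro x
      have : ∀ y, I₂ (x, y) = ∫⁻ s, W (x, s) * P (s, y) ^ (2:ℝ) := fun y => rfl
      simp only [this]
      rw [lintegral_lintegral_swap]
      · apply lintegral_congr
        intro s
        exact lintegral_const_mul' _ _ (hWne _)
      · apply Measurable.aemeasurable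
        exact (hWm.comp (measurable_const.prodMk measurable_snd)).mul
          ((hPm.comp (measurable_snd.prodMk measurable_fst)).pow measurable_const)
    simp only [hswap1]
    rw [lintegral_lintegral_swap]
    swap
    · apply Measurable.aemeasurable
      exact (hWm.comp (measurable_fst.prodMk measurable_snd)).mul
        ((Measurable.lintegral_prod_right'
          (f := fun w : ℝ × ℝ => P (w.1, w.2) ^ (2:ℝ))
          ((hPm.comp (measurable_fst.prodMk measurable_snd)).pow measurable_const)).comp
            measurable_snd)
    -- now bound ∫⁻ x, W (x, s) ∂ν₁
    have hW_bound : ∀ s : ℝ, (∫⁻ x, W (x, s) ∂ν₁) ≤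
        ENNReal.ofReal A * (Set.Ioo a b).indicator 1 s := by
      intro s
      by_cases hs : s ∈ Set.Ioo a b
      · have h1 : ∀ᵐ x ∂ν₁, W (x, s) ≤
            (Set.Ioc s b).indicator (fun x => ENNReal.ofReal ((x - s) ^ (α₁ - 1))) x := by
          rw [hν₁def]
          filter_upwards [ae_restrict_mem measurableSet_Ioo] with x hx
          rw [hWind]
          rw [Set.indicator_apply, Set.indicator_apply]
          by_cases hmem : s ∈ Set.Ioc a x
          · rcases eq_or_lt_of_le hmem.2 with heq | hlt
            · simp only [hmem, if_true]
              rw [← heq]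
              rw [sub_self, Real.zero_rpow (by linarith)]
              simp
            · have : x ∈ Set.Ioc s b := ⟨hlt, hx.2.le⟩
              simp [hmem, this]
          · simp [hmem]
        calc (∫⁻ x, W (x, s) ∂ν₁)
            ≤ ∫⁻ x, (Set.Ioc s b).indicator
                (fun x => ENNReal.ofReal ((x - s) ^ (α₁ - 1))) x ∂ν₁ := lintegral_mono_ae h1
          _ ≤ ∫⁻ x, (Set.Ioc s b).indicator
                (fun x => ENNReal.ofReal ((x - s) ^ (α₁ - 1))) x ∂volume := by
              rw [hν₁def]; exact setLIntegral_le_lintegral _ _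
          _ = ∫⁻ x in Set.Ioc s b, ENNReal.ofReal ((x - s) ^ (α₁ - 1)) ∂volume :=
              lintegral_indicator measurableSet_Ioc _
          _ = ENNReal.ofReal ((b - s) ^ α₁ / α₁) := kern_int2 hα0 s b hs.2.le
          _ ≤ ENNReal.ofReal A * (Set.Ioo a b).indicator 1 s := by
              simp only [hs, Set.indicator_of_mem, Pi.one_apply, mul_one]
              apply ENNReal.ofReal_le_ofReal
              apply div_le_div_of_nonneg_right ?_ hα0.le
              exact rpow_le_rpow (by linarith [hs.2]) (by linarith [hs.1]) hα0.le
      · have h0 : ∀ᵐ x ∂ν₁, W (x, s) = 0 := by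
          rw [hν₁def]
          filter_upwards [ae_restrict_mem measurableSet_Ioo] with x hx
          rw [hWind, Set.indicator_apply, if_neg]
          intro hmem
          exact hs ⟨hmem.1, lt_of_le_of_lt hmem.2 hx.2⟩
        rw [lintegral_congr_ae h0]
        simp [hs]
    calc ∫⁻ s, ∫⁻ x, W (x, s) * (∫⁻ y, P (s, y) ^ (2:ℝ) ∂ν₂) ∂ν₁ ∂volume
        = ∫⁻ s, (∫⁻ x, W (x, s) ∂ν₁) * (∫⁻ y, P (s, y) ^ (2:ℝ) ∂ν₂) ∂volume := by
          apply lintegral_congr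
          intro s
          exact lintegral_mul_const _ (hWm.comp (measurable_id.prodMk measurable_const))
      _ ≤ ∫⁻ s, ENNReal.ofReal A *
            (Set.Ioo a b).indicator (fun s => ∫⁻ y, P (s, y) ^ (2:ℝ) ∂ν₂) s ∂volume := by
          apply lintegral_mono
          intro s
          show (∫⁻ x, W (x, s) ∂ν₁) * (∫⁻ y, P (s, y) ^ (2:ℝ) ∂ν₂) ≤
            ENNReal.ofReal A * (Set.Ioo a b).indicator
              (fun s => ∫⁻ y, P (s, y) ^ (2:ℝ) ∂ν₂) s
          by_cases hs : s ∈ Set.Ioo a b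
          · rw [Set.indicator_of_mem hs]
            refine mul_le_mul_left ?_ _
            simpa [Set.indicator_of_mem hs] using hW_bound s
          · have hb := hW_bound s
            rw [Set.indicator_of_notMem hs] at hb
            rw [Set.indicator_of_notMem hs]
            simp only [mul_zero] at hb ⊢
            exact le_trans (mul_le_mul_left hb _) (by simp)
      _ = ENNReal.ofReal A * ∫⁻ s, (Set.Ioo a b).indicator
            (fun s => ∫⁻ y, P (s, y) ^ (2:ℝ) ∂ν₂) s ∂volume :=
          lintegral_const_mul' _ _ ENNReal.ofReal_ne_top
      _ = ENNReal.ofReal A * ∫⁻ s in Set.Ioo a b, (∫⁻ y, P (s, y) ^ (2:ℝ) ∂ν₂) ∂volume := by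
          rw [lintegral_indicator measurableSet_Ioo]
      _ = ENNReal.ofReal A * ∫⁻ z, P z ^ (2:ℝ) ∂(ν₁.prod ν₂) := by
          congr 1
          have hm2 : Measurable fun z : ℝ × ℝ => P z ^ (2:ℝ) :=
            hPm.pow (measurable_const : Measurable fun _ : ℝ × ℝ => (2:ℝ))
          rw [lintegral_prod (fun z => P z ^ (2:ℝ)) hm2.aemeasurable]
  -- norms
  have hNp : (∫⁻ z, P z ^ (2:ℝ) ∂μ) ^ ((1:ℝ)/2) = eLpNorm p 2 μ := by
    rw [eLpNorm_eq_lintegral_rpow_enorm_toReal (by norm_num) (by norm_num)]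
    norm_num
    rfl
  have hNq : (∫⁻ z, Q z ^ (2:ℝ) ∂μ) ^ ((1:ℝ)/2) = eLpNorm q 2 μ := by
    rw [eLpNorm_eq_lintegral_rpow_enorm_toReal (by norm_num) (by norm_num)]
    norm_num
    rfl
  -- assemble
  calc ∫⁻ z in Ω, (‖leftRLx a α₁ p z * q z‖₊ : ℝ≥0∞)
      ≤ ∫⁻ z, ENNReal.ofReal (1 / Real.Gamma α₁) * (I z * Q z) ∂μ := lintegral_mono_ae step1
    _ = ENNReal.ofReal (1 / Real.Gamma α₁) * ∫⁻ z, I z * Q z ∂μ :=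
        lintegral_const_mul' _ _ ENNReal.ofReal_ne_top
    _ ≤ ENNReal.ofReal (1 / Real.Gamma α₁) *
          ∫⁻ z, ENNReal.ofReal A ^ ((1:ℝ)/2) * (I₂ z ^ ((1:ℝ)/2) * Q z) ∂μ :=
        mul_le_mul_right (lintegral_mono_ae step2) _
    _ = ENNReal.ofReal (1 / Real.Gamma α₁) * (ENNReal.ofReal A ^ ((1:ℝ)/2) *
          ∫⁻ z, I₂ z ^ ((1:ℝ)/2) * Q z ∂μ) := by
        rw [lintegral_const_mul' _ _ (by
          exact ENNReal.rpow_ne_top_of_nonneg (by norm_num) ENNReal.ofReal_ne_top)]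
    _ ≤ ENNReal.ofReal (1 / Real.Gamma α₁) * (ENNReal.ofReal A ^ ((1:ℝ)/2) *
          ((∫⁻ z, I₂ z ∂μ) ^ ((1:ℝ)/2) * (∫⁻ z, Q z ^ (2:ℝ) ∂μ) ^ ((1:ℝ)/2))) :=
        mul_le_mul_right (mul_le_mul_right step3 _) _
    _ ≤ ENNReal.ofReal (1 / Real.Gamma α₁) * (ENNReal.ofReal A ^ ((1:ℝ)/2) *
          ((ENNReal.ofReal A * ∫⁻ z, P z ^ (2:ℝ) ∂μ) ^ ((1:ℝ)/2) *
            (∫⁻ z, Q z ^ (2:ℝ) ∂μ) ^ ((1:ℝ)/2))) := by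
        refine mul_le_mul_right (mul_le_mul_right (mul_le_mul_left ?_ _) _) _
        exact ENNReal.rpow_le_rpow step4 (by norm_num)
    _ = ENNReal.ofReal ((b - a) ^ α₁ / Real.Gamma (α₁ + 1)) *
          (eLpNorm p 2 μ * eLpNorm q 2 μ) := by
        rw [ENNReal.mul_rpow_of_nonneg _ _ (by norm_num : (0:ℝ) ≤ (1:ℝ)/2)]
        rw [hNp, hNq]
        have hhalf : ENNReal.ofReal A ^ ((1:ℝ)/2) * ENNReal.ofReal A ^ ((1:ℝ)/2) =
            ENNReal.ofReal A := by
          rw [← ENNReal.rpow_add_of_nonneg _ _ (by norm_num) (by norm_num)]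
          norm_num
        have hconst : ENNReal.ofReal (1 / Real.Gamma α₁) * ENNReal.ofReal A =
            ENNReal.ofReal ((b - a) ^ α₁ / Real.Gamma (α₁ + 1)) := by
          rw [← ENNReal.ofReal_mul (by positivity)]
          congr 1
          rw [Real.Gamma_add_one hα0.ne', hAdef]
          field_simp
        rw [show ENNReal.ofReal A ^ ((1:ℝ)/2) *
              (ENNReal.ofReal A ^ ((1:ℝ)/2) * eLpNorm p 2 μ * eLpNorm q 2 μ) =
            (ENNReal.ofReal A ^ ((1:ℝ)/2) * ENNReal.ofReal A ^ ((1:ℝ)/2)) *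
              (eLpNorm p 2 μ * eLpNorm q 2 μ) from by ring]
        rw [hhalf, ← mul_assoc, hconst]

theorem stmt13 (a b c d α₁ : ℝ) (hab : a < b) (hcd : c < d)
    (hα0 : 0 < α₁) (hα1 : α₁ < 1) (p q : ℝ × ℝ → ℝ)
    (hp : MemLp p 2 (volume.restrict (Set.Ioo a b ×ˢ Set.Ioo c d)))
    (hq : MemLp q 2 (volume.restrict (Set.Ioo a b ×ˢ Set.Ioo c d))) :
    |∫ z in Set.Ioo a b ×ˢ Set.Ioo c d, leftRLx a α₁ p z * q z| ≤
      ((b - a) ^ α₁ / Real.Gamma (α₁ + 1)) *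
        ((eLpNorm p 2 (volume.restrict (Set.Ioo a b ×ˢ Set.Ioo c d))).toReal *
          (eLpNorm q 2 (volume.restrict (Set.Ioo a b ×ˢ Set.Ioo c d))).toReal) := by
  have hΩm : MeasurableSet (Set.Ioo a b ×ˢ Set.Ioo c d) :=
    measurableSet_Ioo.prod measurableSet_Ioo
  set Ω : Set (ℝ × ℝ) := Set.Ioo a b ×ˢ Set.Ioo c d with hΩdef
  set μ : Measure (ℝ × ℝ) := volume.restrict Ω with hμdef
  set ν₁ : Measure ℝ := volume.restrict (Set.Ioo a b) with hν₁def
  set ν₂ : Measure ℝ := volume.restrict (Set.Ioo c d) with hν₂def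
  have hprod : μ = ν₁.prod ν₂ := by
    rw [hμdef, hν₁def, hν₂def, Measure.prod_restrict, ← Measure.volume_eq_prod]
  obtain ⟨hpm, hpfin⟩ := hp
  obtain ⟨hqm, hqfin⟩ := hq
  set p' : ℝ × ℝ → ℝ := hpm.mk p with hp'def
  set q' : ℝ × ℝ → ℝ := hqm.mk q with hq'def
  have hp'm : StronglyMeasurable p' := hpm.stronglyMeasurable_mk
  have hq'm : StronglyMeasurable q' := hqm.stronglyMeasurable_mk
  have hpp' : p =ᵐ[μ] p' := hpm.ae_eq_mk
  have hqq' : q =ᵐ[μ] q' := hqm.ae_eq_mk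
  have hNp : eLpNorm p 2 μ = eLpNorm p' 2 μ := eLpNorm_congr_ae hpp'
  have hNq : eLpNorm q 2 μ = eLpNorm q' 2 μ := eLpNorm_congr_ae hqq'
  have hLae : (fun z => leftRLx a α₁ p z) =ᵐ[μ] fun z => leftRLx a α₁ p' z := by
    have h0 : ∀ᵐ w ∂(ν₂.prod ν₁), (fun z : ℝ × ℝ => p z = p' z) w.swap :=
      (Measure.measurePreserving_swap (μ := ν₂) (ν := ν₁)).quasiMeasurePreserving.ae
        (p := fun z : ℝ × ℝ => p z = p' z) (by rw [← hprod]; exact hpp')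
    have h1 : ∀ᵐ y ∂ν₂, ∀ᵐ s ∂ν₁, p (s, y) = p' (s, y) := Measure.ae_ae_of_ae_prod h0
    have h2 : ∀ᵐ y ∂ν₂, ∀ x ∈ Set.Ioo a b,
        (∫ s in a..x, (x - s) ^ (α₁ - 1) * p (s, y)) =
          ∫ s in a..x, (x - s) ^ (α₁ - 1) * p' (s, y) := by
      filter_upwards [h1] with y hy
      intro x hx
      have hy' : ∀ᵐ s ∂(volume : Measure ℝ), s ∈ Set.Ioo a b → p (s, y) = p' (s, y) :=
        ae_imp_of_ae_restrict hy
      apply intervalIntegral.integral_congr_ae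
      filter_upwards [hy'] with s hs hmem
      have hsm : s ∈ Set.Ioo a b := by
        rw [Set.uIoc_of_le hx.1.le] at hmem
        exact ⟨hmem.1, lt_of_le_of_lt hmem.2 hx.2⟩
      rw [hs hsm]
    have h3 : ∀ᵐ z ∂μ, ∀ x ∈ Set.Ioo a b,
        (∫ s in a..x, (x - s) ^ (α₁ - 1) * p (s, z.2)) =
          ∫ s in a..x, (x - s) ^ (α₁ - 1) * p' (s, z.2) := by
      rw [hprod]
      exact Measure.quasiMeasurePreserving_snd.ae h2
    filter_upwards [h3, ae_restrict_mem hΩm] with z h hz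
    unfold leftRLx
    rw [h z.1 hz.1]
  have hInt : ∫ z in Ω, leftRLx a α₁ p z * q z = ∫ z in Ω, leftRLx a α₁ p' z * q' z := by
    apply integral_congr_ae
    filter_upwards [hLae, hqq'] with z h1 h2
    rw [h1, h2]
  have hkey := key a b c d α₁ hab hcd hα0 hα1 p' q' hp'm hq'm
  have hC0 : 0 ≤ (b - a) ^ α₁ / Real.Gamma (α₁ + 1) :=
    div_nonneg (rpow_nonneg (by linarith) _) (Real.Gamma_pos_of_pos (by linarith)).le
  have hfin : ENNReal.ofReal ((b - a) ^ α₁ / Real.Gamma (α₁ + 1)) *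
      (eLpNorm p' 2 μ * eLpNorm q' 2 μ) ≠ ∞ := by
    apply ENNReal.mul_ne_top ENNReal.ofReal_ne_top
    apply ENNReal.mul_ne_top
    · rw [← hNp]; exact hpfin.ne
    · rw [← hNq]; exact hqfin.ne
  rw [hInt, hNp, hNq, ← Real.norm_eq_abs]
  calc ‖∫ z in Ω, leftRLx a α₁ p' z * q' z‖
      ≤ (∫⁻ z, ENNReal.ofReal ‖leftRLx a α₁ p' z * q' z‖ ∂μ).toReal :=
        norm_integral_le_lintegral_norm _
    _ ≤ (ENNReal.ofReal ((b - a) ^ α₁ / Real.Gamma (α₁ + 1)) *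
          (eLpNorm p' 2 μ * eLpNorm q' 2 μ)).toReal := by
        apply ENNReal.toReal_mono hfin
        refine le_trans (le_of_eq ?_) hkey
        apply lintegral_congr
        intro z
        rw [ofReal_norm]
        rfl
    _ = ((b - a) ^ α₁ / Real.Gamma (α₁ + 1)) *
          ((eLpNorm p' 2 μ).toReal * (eLpNorm q' 2 μ).toReal) := by
        rw [ENNReal.toReal_mul, ENNReal.toReal_mul, ENNReal.toReal_ofReal hC0]
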